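/- For every k ≥ 1 there exists n with PPL_t(n) = k, so SP_t(k) is well-defined; moreover SP_t(1) = 1, SP_t(2) = 2, SP_t(3) = 6, and SP_t(k+3) = 16·SP_t(k) − 6 for all k ≥ 1. -/

import Mathlib

/-- The Thue–Morse word: `tm n` is the number of ones (sum of binary digits)
in the binary expansion of `n`, taken mod 2. -/
def tm (n : ℕ) : ℕ := (Nat.digits 2 n).sum % 2


lemma tm_lt_two (n : ℕ) : tm n < 2 := Nat.mod_lt _ (by norm_num)

lemma tm_two_mul (n : ℕ) : tm (2*n) = tm n := by
  rcases Nat.eq_zero_or_pos n with h | h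
  · simp [h]
  · unfold tm
    rw [Nat.digits_def' (by norm_num : (1:ℕ) < 2) (by omega : 0 < 2*n)]
    simp [Nat.mul_div_cancel_left, Nat.mul_mod_right]

lemma tm_two_mul_add_one (n : ℕ) : tm (2*n+1) = (tm n + 1) % 2 := by
  unfold tm
  rw [Nat.digits_def' (by norm_num : (1:ℕ) < 2) (by omega : 0 < 2*n+1)]
  have h1 : (2*n+1) % 2 = 1 := by omega
  have h2 : (2*n+1) / 2 = n := by omega
  rw [h1, h2]
  simp [List.sum_cons, Nat.add_mod, Nat.add_comm]

lemma tm4_0 (n : ℕ) : tm (4*n) = tm n := by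
  have : 4*n = 2*(2*n) := by ring
  rw [this, tm_two_mul, tm_two_mul]

lemma tm4_1 (n : ℕ) : tm (4*n+1) = (tm n + 1) % 2 := by
  have : 4*n+1 = 2*(2*n)+1 := by ring
  rw [this, tm_two_mul_add_one, tm_two_mul]

lemma tm4_2 (n : ℕ) : tm (4*n+2) = (tm n + 1) % 2 := by
  have : 4*n+2 = 2*(2*n+1) := by ring
  rw [this, tm_two_mul, tm_two_mul_add_one]

lemma tm4_3 (n : ℕ) : tm (4*n+3) = tm n := by
  have : 4*n+3 = 2*(2*n+1)+1 := by ring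
  rw [this, tm_two_mul_add_one, tm_two_mul_add_one]
  have := tm_lt_two n; omega

lemma tm_consec_ne (n : ℕ) : tm (2*n) ≠ tm (2*n+1) := by
  rw [tm_two_mul, tm_two_mul_add_one]
  have := tm_lt_two n; omega

lemma tm_eq_succ_odd {x : ℕ} (h : tm x = tm (x+1)) : x % 2 = 1 := by
  by_contra hc
  obtain ⟨v, rfl⟩ : ∃ v, x = 2*v := ⟨x/2, by omega⟩
  exact tm_consec_ne v h

lemma no3 {y : ℕ} (h1 : tm y = tm (y+1)) (h2 : tm (y+1) = tm (y+2)) : False := by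
  rcases Nat.even_or_odd y with hy | hy
  · obtain ⟨v, rfl⟩ : ∃ v, y = 2*v := ⟨y/2, by rcases hy with ⟨w,hw⟩; omega⟩
    exact tm_consec_ne v h1
  · obtain ⟨v, rfl⟩ : ∃ v, y = 2*v+1 := ⟨y/2, by rcases hy with ⟨w,hw⟩; omega⟩
    apply tm_consec_ne (v+1)
    have e1 : 2*v+1+1 = 2*(v+1) := by ring
    have e2 : 2*v+1+2 = 2*(v+1)+1 := by ring
    rw [e1, e2] at h2; exact h2

lemma factO {v : ℕ} (h1 : tm (v+1) = tm (v+3)) (h2 : tm v = tm (v+4)) : False := by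
  have htl := tm_lt_two
  rcases Nat.even_or_odd v with hv | hv
  · obtain ⟨w, rfl⟩ : ∃ w, v = 2*w := ⟨v/2, by rcases hv with ⟨u,hu⟩; omega⟩
    have e3 : 2*w+3 = 2*(w+1)+1 := by ring
    rw [e3, tm_two_mul_add_one, tm_two_mul_add_one] at h1
    have hww : tm w = tm (w+1) := by have := htl w; have := htl (w+1); omega
    have e4 : 2*w+4 = 2*(w+2) := by ring
    rw [e4, tm_two_mul, tm_two_mul] at h2
    exact no3 hww (by rw [← hww, h2])
  · obtain ⟨w, rfl⟩ : ∃ w, v = 2*w+1 := ⟨v/2, by rcases hv with ⟨u,hu⟩; omega⟩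
    have e1 : 2*w+1+1 = 2*(w+1) := by ring
    have e3 : 2*w+1+3 = 2*(w+2) := by ring
    rw [e1, e3, tm_two_mul, tm_two_mul] at h1
    have e4 : 2*w+1+4 = 2*(w+2)+1 := by ring
    rw [e4, tm_two_mul_add_one, tm_two_mul_add_one] at h2
    have hw2 : tm w = tm (w+2) := by have := htl w; have := htl (w+2); omega
    exact no3 (by rw [hw2, ← h1]) h1

def L (n : ℕ) : ℕ :=
  if _h : n < 4 then (if n = 0 then 0 else if n = 3 then 2 else n)
  else
    if n % 4 = 0 then L (n/4)
    else if n % 4 = 1 then L (n/4) + 1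
    else if n % 4 = 2 then min (L (n/4)) (L (n/4 + 1)) + 2
    else min (L (n/4) + 2) (L (n/4 + 1) + 1)
  termination_by n
  decreasing_by all_goals omega

lemma L0 : L 0 = 0 := by unfold L; norm_num
lemma L1 : L 1 = 1 := by unfold L; norm_num
lemma L2 : L 2 = 2 := by unfold L; norm_num
lemma L3 : L 3 = 2 := by unfold L; norm_num

lemma L4_0 (m : ℕ) : L (4*m) = L m := by
  rcases Nat.eq_zero_or_pos m with rfl | h
  · rfl
  · rw [L, dif_neg (by omega : ¬ (4*m < 4)), if_pos (by omega : 4*m % 4 = 0),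
      (by omega : 4*m/4 = m)]

lemma L4_1 (m : ℕ) : L (4*m+1) = L m + 1 := by
  rcases Nat.eq_zero_or_pos m with rfl | h
  · rw [show 4*0+1 = 1 by norm_num, L1, L0]
  · rw [L, dif_neg (by omega : ¬ (4*m+1 < 4)), if_neg (by omega : ¬ (4*m+1) % 4 = 0),
      if_pos (by omega : (4*m+1) % 4 = 1), (by omega : (4*m+1)/4 = m)]

lemma L4_2 (m : ℕ) : L (4*m+2) = min (L m) (L (m+1)) + 2 := by
  rcases Nat.eq_zero_or_pos m with rfl | h
  · rw [show 4*0+2 = 2 by norm_num, L2, L0, show (0:ℕ)+1 = 1 by norm_num, L1]; omega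
  · rw [L, dif_neg (by omega : ¬ (4*m+2 < 4)), if_neg (by omega : ¬ (4*m+2) % 4 = 0),
      if_neg (by omega : ¬ (4*m+2) % 4 = 1), if_pos (by omega : (4*m+2) % 4 = 2),
      (by omega : (4*m+2)/4 = m)]

lemma L4_3 (m : ℕ) : L (4*m+3) = min (L m + 2) (L (m+1) + 1) := by
  rcases Nat.eq_zero_or_pos m with rfl | h
  · rw [show 4*0+3 = 3 by norm_num, L3, L0, show (0:ℕ)+1 = 1 by norm_num, L1]; omega
  · rw [L, dif_neg (by omega : ¬ (4*m+3 < 4)), if_neg (by omega : ¬ (4*m+3) % 4 = 0),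
      if_neg (by omega : ¬ (4*m+3) % 4 = 1), if_neg (by omega : ¬ (4*m+3) % 4 = 2),
      (by omega : (4*m+3)/4 = m)]

lemma L_diff (n : ℕ) : L (n+1) ≤ L n + 1 ∧ L n ≤ L (n+1) + 1 := by
  induction n using Nat.strong_induction_on with
  | _ n ih =>
  rcases (by omega : n % 4 = 0 ∨ n % 4 = 1 ∨ n % 4 = 2 ∨ n % 4 = 3) with h | h | h | h
  · obtain ⟨q, rfl⟩ : ∃ q, n = 4*q := ⟨n/4, by omega⟩
    rw [L4_1, L4_0]; omega
  · obtain ⟨q, rfl⟩ : ∃ q, n = 4*q+1 := ⟨n/4, by omega⟩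
    rcases Nat.eq_zero_or_pos q with rfl | hq
    · norm_num [L1, L2]
    have ihq := ih q (by omega)
    rw [show 4*q+1+1 = 4*q+2 by ring, L4_2, L4_1]; omega
  · obtain ⟨q, rfl⟩ : ∃ q, n = 4*q+2 := ⟨n/4, by omega⟩
    have ihq := ih q (by omega)
    rw [show 4*q+2+1 = 4*q+3 by ring, L4_3, L4_2]; omega
  · obtain ⟨q, rfl⟩ : ∃ q, n = 4*q+3 := ⟨n/4, by omega⟩
    have ihq := ih q (by omega)
    rw [show 4*q+3+1 = 4*(q+1) by ring, L4_0, L4_3]; omega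

lemma L_succ_le (n : ℕ) : L (n+1) ≤ L n + 1 := (L_diff n).1
lemma L_le_succ (n : ℕ) : L n ≤ L (n+1) + 1 := (L_diff n).2
lemma L_add_two_le (n : ℕ) : L (n+2) ≤ L n + 2 := by
  have h1 := L_succ_le (n+1); have h2 := L_succ_le n
  rw [show n+1+1 = n+2 by ring] at h1; omega

def PalF (b l : ℕ) : Prop :=
  ∀ x y, b ≤ x → b ≤ y → x + y + 1 = 2*b + l → tm x = tm y

lemma palF_shrink {b l : ℕ} (h : PalF b (l+2)) : PalF (b+1) l :=
  fun x y hx hy hs => h x y (by omega) (by omega) (by omega)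

theorem master : ∀ l b, PalF b l → L (b + l) ≤ L b + 1 := by
  intro l
  induction l using Nat.strong_induction_on with
  | _ l ih =>
  intro b hp
  rcases Nat.even_or_odd l with he | ho
  case inr => -- odd case
    obtain ⟨r, rfl⟩ : ∃ r, l = 2*r+1 := by rcases ho with ⟨r, hr⟩; exact ⟨r, by omega⟩
    rcases (by omega : r = 0 ∨ r = 1 ∨ 2 ≤ r) with rfl | rfl | hr
    · simpa using L_succ_le b
    · -- l = 3
      have cond : tm b = tm (b+2) := hp b (b+2) le_rfl (by omega) (by omega)
      rcases (by omega : b % 4 = 0 ∨ b % 4 = 1 ∨ b % 4 = 2 ∨ b % 4 = 3) with h | h | h | h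
      · obtain ⟨q, rfl⟩ : ∃ q, b = 4*q := ⟨b/4, by omega⟩
        rw [tm4_0, show 4*q+2 = 4*q+2 from rfl, tm4_2] at cond
        have := tm_lt_two q; omega
      · obtain ⟨q, rfl⟩ : ∃ q, b = 4*q+1 := ⟨b/4, by omega⟩
        rw [tm4_1, show 4*q+1+2 = 4*q+3 by ring, tm4_3] at cond
        have := tm_lt_two q; omega
      · obtain ⟨q, rfl⟩ : ∃ q, b = 4*q+2 := ⟨b/4, by omega⟩
        rw [show 4*q+2+(2*1+1) = 4*(q+1)+1 by ring, L4_1, L4_2]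
        have := L_succ_le q; omega
      · obtain ⟨q, rfl⟩ : ∃ q, b = 4*q+3 := ⟨b/4, by omega⟩
        rw [show 4*q+3+(2*1+1) = 4*(q+1)+2 by ring, L4_2, L4_3]
        have h1 := L_succ_le q; have h2 := L_succ_le (q+1); omega
    · -- l = 2r+1, r ≥ 2 : impossible
      obtain ⟨u, rfl⟩ : ∃ u, r = u + 2 := ⟨r-2, by omega⟩
      have h1 : tm (b+u+1) = tm (b+u+3) :=
        hp (b+u+1) (b+u+3) (by omega) (by omega) (by omega)
      have h2 : tm (b+u) = tm (b+u+4) :=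
        hp (b+u) (b+u+4) (by omega) (by omega) (by omega)
      exact (factO h1 h2).elim
  case inl => -- even case, l = 2d
    obtain ⟨d, rfl⟩ : ∃ d, l = 2*d := by rcases he with ⟨d, hd⟩; exact ⟨d, by omega⟩
    rcases Nat.eq_zero_or_pos d with rfl | hd
    · simpa using Nat.le_succ (L b)
    obtain ⟨dm, rfl⟩ : ∃ dm, d = dm + 1 := ⟨d-1, by omega⟩
    have hcen : tm (b + dm) = tm (b + dm + 1) :=
      hp (b+dm) (b+dm+1) (by omega) (by omega) (by omega)
    have hodd : (b + dm) % 2 = 1 := tm_eq_succ_odd hcen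
    rcases (by omega : (b + dm + 1) % 4 = 0 ∨ (b + dm + 1) % 4 = 2) with hc | hc
    · -- center c = 4m
      obtain ⟨m, hm⟩ : ∃ m, b + dm + 1 = 4*m := ⟨(b+dm+1)/4, by omega⟩
      rcases (by omega : dm = 0 ∨ dm = 1 ∨ 2 ≤ dm) with rfl | rfl | hdm
      · -- d = 1, b = 4(m-1)+3
        obtain ⟨mm, rfl⟩ : ∃ mm, b = 4*mm+3 := ⟨m-1, by omega⟩
        rw [show 4*mm+3+2*(0+1) = 4*(mm+1)+1 by ring, L4_1, L4_3]
        have := L_succ_le mm; omega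
      · -- d = 2, b = 4(m-1)+2
        obtain ⟨mm, rfl⟩ : ∃ mm, b = 4*mm+2 := ⟨m-1, by omega⟩
        rw [show 4*mm+2+2*(1+1) = 4*(mm+1)+2 by ring, L4_2, L4_2]
        have h1 := L_succ_le mm; have h2 := L_succ_le (mm+1); omega
      · -- d ≥ 3 : general machinery
        have hbd : b + (dm+1) = 4*m := hm
        set d := dm + 1 with hdd
        have hd3 : 3 ≤ d := by omega
        set d' := (d+3)/4 with hd'
        have hdd' : 4*d' - 3 ≤ d ∧ d ≤ 4*d' ∧ 1 ≤ d' ∧ d' < d := by omega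
        have hmd' : d' ≤ m := by omega
        obtain ⟨mw, hmw⟩ : ∃ mw, m = mw + d' := ⟨m - d', by omega⟩
        have key : ∀ x y, mw ≤ x → x < y → x + y + 1 = 2*m → tm x = tm y := by
          intro x y hx hxy hs
          have h := hp (4*x+3) (4*y) (by omega) (by omega) (by omega)
          rw [tm4_3, tm4_0] at h
          exact h
        have hPal : PalF mw (2*d') := by
          intro x y hx hy hs
          rcases lt_trichotomy x y with hxy | rfl | hxy
          · exact key x y hx hxy (by omega)
          · rfl
          · exact (key y x hy hxy (by omega)).symm
        have ihA := ih (2*d') (by omega) mw hPal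
        have hPalB : PalF (mw+1) (2*(d'-1)) := by
          apply palF_shrink
          rw [show 2*(d'-1)+2 = 2*d' by omega]
          exact hPal
        have ihB := ih (2*(d'-1)) (by omega) (mw+1) hPalB
        rcases (by omega : d = 4*(d'-1)+1 ∨ d = 4*(d'-1)+2 ∨ d = 4*(d'-1)+3 ∨ d = 4*(d'-1)+4)
          with hs | hs | hs | hs
        · -- s = 1, u := d'-1 ≥ 1
          obtain ⟨u, hu⟩ : ∃ u, d' = u + 1 := ⟨d'-1, by omega⟩
          have hu1 : 1 ≤ u := by omega
          obtain rfl : b = 4*mw + 3 := by omega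
          rw [show 4*mw+3+2*d = 4*(mw+2*u+1)+1 by omega, L4_1, L4_3]
          have hB : L (mw+2*u+1) ≤ L (mw+1) + 1 := by
            have : mw+1+2*(d'-1) = mw+2*u+1 := by omega
            rwa [this] at ihB
          have := L_succ_le mw; omega
        · -- s = 2
          obtain ⟨u, hu⟩ : ∃ u, d' = u + 1 := ⟨d'-1, by omega⟩
          have hu1 : 1 ≤ u := by omega
          obtain rfl : b = 4*mw + 2 := by omega
          rw [show 4*mw+2+2*d = 4*(mw+2*u+1)+2 by omega, L4_2, L4_2,
            show mw+2*u+1+1 = mw+2*u+2 by ring]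
          have hA : L (mw+2*u+2) ≤ L mw + 1 := by
            have : mw+2*d' = mw+2*u+2 := by omega
            rwa [this] at ihA
          have hB : L (mw+2*u+1) ≤ L (mw+1) + 1 := by
            have : mw+1+2*(d'-1) = mw+2*u+1 := by omega
            rwa [this] at ihB
          omega
        · -- s = 3
          obtain ⟨u, hu⟩ : ∃ u, d' = u + 1 := ⟨d'-1, by omega⟩
          obtain rfl : b = 4*mw + 1 := by omega
          rw [show 4*mw+1+2*d = 4*(mw+2*u+1)+3 by omega, L4_3, L4_1,
            show mw+2*u+1+1 = mw+2*u+2 by ring]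
          have hA : L (mw+2*u+2) ≤ L mw + 1 := by
            have : mw+2*d' = mw+2*u+2 := by omega
            rwa [this] at ihA
          omega
        · -- s = 4
          obtain ⟨u, hu⟩ : ∃ u, d' = u + 1 := ⟨d'-1, by omega⟩
          obtain rfl : b = 4*mw := by omega
          rw [show 4*mw+2*d = 4*(mw+2*u+2) by omega, L4_0, L4_0]
          have hA : L (mw+2*u+2) ≤ L mw + 1 := by
            have : mw+2*d' = mw+2*u+2 := by omega
            rwa [this] at ihA
          exact hA
    · -- center c = 4m+2
      obtain ⟨m, hm⟩ : ∃ m, b + dm + 1 = 4*m+2 := ⟨(b+dm+1)/4, by omega⟩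
      rcases (by omega : dm = 0 ∨ dm = 1 ∨ 2 ≤ dm) with rfl | rfl | hdm
      · -- d = 1, b = 4m+1
        obtain rfl : b = 4*m+1 := by omega
        rw [show 4*m+1+2*(0+1) = 4*m+3 by ring, L4_3, L4_1]
        omega
      · -- d = 2, b = 4m
        obtain rfl : b = 4*m := by omega
        rw [show 4*m+2*(1+1) = 4*(m+1) by ring, L4_0, L4_0]
        exact L_succ_le m
      · -- d ≥ 3
        have hbd : b + (dm+1) = 4*m+2 := hm
        set d := dm + 1 with hdd
        have hd3 : 3 ≤ d := by omega
        have hm1 : 1 ≤ m := by omega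
        obtain ⟨mu, rfl⟩ : ∃ mu, m = mu + 1 := ⟨m-1, by omega⟩
        have cond3 : tm mu = tm (mu+2) := by
          have h := hp (4*mu+3) (4*(mu+2)) (by omega) (by omega) (by omega)
          rwa [tm4_3, tm4_0] at h
        rcases (by omega : 7 ≤ d ∨ d = 3 ∨ d = 4 ∨ d = 5 ∨ d = 6) with hd7 | hs | hs | hs | hs
        · -- d ≥ 7 : impossible
          have hnu : 1 ≤ mu := by omega
          obtain ⟨nu, rfl⟩ : ∃ nu, mu = nu + 1 := ⟨mu-1, by omega⟩
          have c2 : tm nu = tm (nu+4) := by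
            have h := hp (4*nu+3) (4*(nu+4)) (by omega) (by omega) (by omega)
            rwa [tm4_3, tm4_0] at h
          have c1 : tm (nu+1) = tm (nu+3) := by
            have := cond3; rwa [show nu+1+2 = nu+3 by ring] at this
          exact (factO c1 c2).elim
        all_goals (
          have hPal3 : PalF mu 3 := by
            intro x y hx hy hsum
            rcases (by omega : (x = mu ∧ y = mu+2) ∨ (x = mu+1 ∧ y = mu+1) ∨
              (x = mu+2 ∧ y = mu)) with ⟨rfl, rfl⟩ | ⟨rfl, rfl⟩ | ⟨rfl, rfl⟩
            · exact cond3
            · rfl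
            · exact cond3.symm
          have ih3 := ih 3 (by omega) mu hPal3)
        · -- d = 3, b = 4mu+3
          obtain rfl : b = 4*mu+3 := by omega
          rw [show 4*mu+3+2*d = 4*(mu+2)+1 by omega, L4_1, L4_3]
          have h1 := L_succ_le mu; have h2 := L_succ_le (mu+1)
          rw [show mu+1+1 = mu+2 by ring] at h2
          omega
        · -- d = 4, b = 4mu+2
          obtain rfl : b = 4*mu+2 := by omega
          rw [show 4*mu+2+2*d = 4*(mu+2)+2 by omega, L4_2, L4_2,
            show mu+2+1 = mu+3 by ring]
          have h2 := L_succ_le (mu+1)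
          rw [show mu+1+1 = mu+2 by ring] at h2
          omega
        · -- d = 5, b = 4mu+1
          obtain rfl : b = 4*mu+1 := by omega
          rw [show 4*mu+1+2*d = 4*(mu+2)+3 by omega, L4_3, L4_1,
            show mu+2+1 = mu+3 by ring]
          omega
        · -- d = 6, b = 4mu
          obtain rfl : b = 4*mu := by omega
          rw [show 4*mu+2*d = 4*(mu+3) by omega, L4_0, L4_0]
          exact ih3

/-- `ps` is a factorization of the finite word `w` into nonempty palindromes. -/
def IsPalDecomp (w : List ℕ) (ps : List (List ℕ)) : Prop :=
  ps.flatten = w ∧ ∀ p ∈ ps, p ≠ [] ∧ p.Palindrome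

/-- The palindromic length of a finite word: the least number of nonempty
palindromes whose concatenation is the word (0 for the empty word). -/
noncomputable def palLen (w : List ℕ) : ℕ :=
  sInf {k | ∃ ps, ps.length = k ∧ IsPalDecomp w ps}

/-- `pplTM n` is the palindromic length of the prefix of length `n`
of the Thue–Morse word. -/
noncomputable def pplTM (n : ℕ) : ℕ := palLen ((List.range n).map tm)

/-- `spTM k` is the length of the shortest prefix of the Thue–Morse word of
palindromic length `k`. -/
noncomputable def spTM (k : ℕ) : ℕ := sInf {n | pplTM n = k}

/-! ### palLen basics -/

lemma flatten_map_singleton (l : List ℕ) : (l.map (fun a => [a])).flatten = l := by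
  induction l with
  | nil => rfl
  | cons a t ih => simp [ih]

lemma decomp_set_nonempty (w : List ℕ) :
    {k | ∃ ps, ps.length = k ∧ IsPalDecomp w ps}.Nonempty := by
  refine ⟨w.length, w.map (fun a => [a]), by simp, flatten_map_singleton w, ?_⟩
  intro p hp
  simp only [List.mem_map] at hp
  obtain ⟨a, _, rfl⟩ := hp
  exact ⟨by simp, List.Palindrome.singleton a⟩

lemma palLen_le {w : List ℕ} {ps : List (List ℕ)} (h : IsPalDecomp w ps) :
    palLen w ≤ ps.length :=
  Nat.sInf_le ⟨ps, rfl, h⟩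

lemma exists_decomp (w : List ℕ) :
    ∃ ps, ps.length = palLen w ∧ IsPalDecomp w ps :=
  Nat.sInf_mem (decomp_set_nonempty w)

lemma palLen_append_pal {w q : List ℕ} (hq : q.Palindrome) (hne : q ≠ []) :
    palLen (w ++ q) ≤ palLen w + 1 := by
  obtain ⟨ps, hlen, hflat, hpal⟩ := exists_decomp w
  have : IsPalDecomp (w ++ q) (ps ++ [q]) := by
    refine ⟨by rw [List.flatten_append, hflat]; simp, ?_⟩
    intro p hp
    rcases List.mem_append.mp hp with h | h
    · exact hpal p h
    · simp only [List.mem_singleton] at h; subst h; exact ⟨hne, hq⟩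
  calc palLen (w ++ q) ≤ (ps ++ [q]).length := palLen_le this
    _ = palLen w + 1 := by simp [hlen]

lemma palLen_drop_concat {w : List ℕ} {a : ℕ} :
    palLen w ≤ palLen (w ++ [a]) + 1 := by
  obtain ⟨ps, hlen, hflat, hpal⟩ := exists_decomp (w ++ [a])
  rcases List.eq_nil_or_concat ps with rfl | ⟨qs, p, rfl⟩
  · simp at hflat
  rw [List.concat_eq_append] at hflat hpal hlen
  rw [List.flatten_append] at hflat
  simp only [List.flatten_cons, List.flatten_nil, List.append_nil] at hflat
  have hpp : p ≠ [] ∧ p.Palindrome := hpal p (by simp)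
  have hqs : ∀ p' ∈ qs, p' ≠ [] ∧ p'.Palindrome := fun p' h => hpal p' (by simp [h])
  rw [← hlen]
  have hql : (qs ++ [p]).length = qs.length + 1 := by simp
  rw [hql]
  cases hpp.2 with
  | nil => exact absurd rfl hpp.1
  | singleton c =>
      have hw : qs.flatten = w := (List.append_inj' hflat (by simp)).1
      have := palLen_le (w := w) (ps := qs) ⟨hw, hqs⟩
      omega
  | @cons_concat c q' hq' =>
      have hsplit : (qs.flatten ++ (c :: q')) ++ [c] = w ++ [a] := by
        simpa using hflat
      have hw : qs.flatten ++ (c :: q') = w := (List.append_inj' hsplit (by simp)).1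
      rcases List.eq_nil_or_concat q' with rfl | hq'ne
      · have hdec : IsPalDecomp w (qs ++ [[c]]) := by
          refine ⟨by rw [List.flatten_append]; simpa using hw, ?_⟩
          intro p' hp'
          rcases List.mem_append.mp hp' with h | h
          · exact hqs p' h
          · simp only [List.mem_singleton] at h; subst h
            exact ⟨by simp, List.Palindrome.singleton c⟩
        have := palLen_le hdec
        simp only [List.length_append, List.length_cons, List.length_nil] at this
        omega
      · have hne' : q' ≠ [] := by
          rcases hq'ne with ⟨l', b', rfl⟩; simp
        have hdec : IsPalDecomp w (qs ++ [[c], q']) := by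
          refine ⟨by rw [List.flatten_append]; simpa using hw, ?_⟩
          intro p' hp'
          rcases List.mem_append.mp hp' with h | h
          · exact hqs p' h
          · simp only [List.mem_cons, List.mem_singleton] at h
            rcases h with rfl | rfl | h
            · exact ⟨by simp, List.Palindrome.singleton c⟩
            · exact ⟨hne', hq'⟩
            · simp at h
        have := palLen_le hdec
        simp only [List.length_append, List.length_cons, List.length_nil] at this
        omega

/-! ### the block morphism -/

def blk (x : ℕ) : List ℕ := [x, (x+1)%2, (x+1)%2, x]

lemma blk_ne_nil (x : ℕ) : blk x ≠ [] := by simp [blk]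

lemma blk_reverse (x : ℕ) : (blk x).reverse = blk x := rfl

lemma pal_flatMap {p : List ℕ} (hp : p.Palindrome) : (p.flatMap blk).Palindrome := by
  apply List.Palindrome.of_reverse_eq
  rw [List.reverse_flatMap]
  have h1 : List.reverse ∘ blk = blk := funext (fun x => blk_reverse x)
  rw [h1, hp.reverse_eq]

lemma prefix_blk (n : ℕ) :
    (List.range (4*n)).map tm = ((List.range n).map tm).flatMap blk := by
  induction n with
  | zero => rfl
  | succ n ih =>
    rw [show 4*(n+1) = 4*n+1+1+1+1 by ring, List.range_succ, List.range_succ,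
      List.range_succ, List.range_succ, List.range_succ]
    simp only [List.map_append, List.flatMap_append, List.map_cons, List.map_nil,
      List.flatMap_cons, List.flatMap_nil]
    rw [ih, show 4*n+1+1 = 4*n+2 by ring, show 4*n+1+1+1 = 4*n+3 by ring,
      tm4_0, tm4_1, tm4_2, tm4_3]
    simp [blk]

lemma flatten_map_flatMap (ps : List (List ℕ)) :
    (ps.map (fun p => p.flatMap blk)).flatten = ps.flatten.flatMap blk := by
  induction ps with
  | nil => rfl
  | cons p t ih => simp [ih, List.flatMap_append]

/-! ### upper bounds for pplTM -/

lemma pre_succ (n : ℕ) :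
    (List.range (n+1)).map tm = (List.range n).map tm ++ [tm n] := by
  rw [List.range_succ, List.map_append]; rfl

lemma pplTM_succ_le (n : ℕ) : pplTM (n+1) ≤ pplTM n + 1 := by
  unfold pplTM
  rw [pre_succ]
  exact palLen_append_pal (List.Palindrome.singleton (tm n)) (by simp)

lemma pplTM_le_succ (n : ℕ) : pplTM n ≤ pplTM (n+1) + 1 := by
  unfold pplTM
  rw [pre_succ]
  exact palLen_drop_concat

lemma pplTM_zero : pplTM 0 = 0 := by
  unfold pplTM
  have : palLen ((List.range 0).map tm) ≤ 0 := palLen_le (ps := []) ⟨rfl, by simp⟩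
  omega

lemma pplTM_four_le (n : ℕ) : pplTM (4*n) ≤ pplTM n := by
  unfold pplTM
  obtain ⟨ps, hlen, hflat, hpal⟩ := exists_decomp ((List.range n).map tm)
  have hdec : IsPalDecomp ((List.range (4*n)).map tm) (ps.map (fun p => p.flatMap blk)) := by
    refine ⟨by rw [flatten_map_flatMap, hflat, prefix_blk], ?_⟩
    intro p hp
    simp only [List.mem_map] at hp
    obtain ⟨q, hq, rfl⟩ := hp
    obtain ⟨hqne, hqpal⟩ := hpal q hq
    constructor
    · rcases q with _ | ⟨a, t⟩
      · exact absurd rfl hqne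
      · simp [List.flatMap_cons, blk]
    · exact pal_flatMap hqpal
  calc palLen _ ≤ (ps.map (fun p => p.flatMap blk)).length := palLen_le hdec
    _ = palLen ((List.range n).map tm) := by simp [hlen]

lemma pplTM_pair_le (n : ℕ) : pplTM (4*n+3) ≤ pplTM (4*n+1) + 1 := by
  unfold pplTM
  rw [show 4*n+3 = (4*n+2)+1 by ring, pre_succ, show 4*n+2 = (4*n+1)+1 by ring, pre_succ,
    List.append_assoc]
  apply palLen_append_pal
  · have : tm (4*n+1) = tm (4*n+2) := by rw [tm4_1, tm4_2]
    rw [show [tm (4*n+1)] ++ [tm (4*n+2)] = tm (4*n+1) :: ([] ++ [tm (4*n+2)]) by simp]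
    rw [← this]
    exact List.Palindrome.cons_concat _ List.Palindrome.nil
  · simp

lemma pplTM_le_L (n : ℕ) : pplTM n ≤ L n := by
  induction n using Nat.strong_induction_on with
  | _ n ih =>
  rcases (by omega : n = 0 ∨ n % 4 = 0 ∧ 1 ≤ n ∨ n % 4 = 1 ∨ n % 4 = 2 ∨ n % 4 = 3)
    with rfl | ⟨h, h1⟩ | h | h | h
  · rw [pplTM_zero, L0]
  · obtain ⟨q, rfl⟩ : ∃ q, n = 4*q := ⟨n/4, by omega⟩
    rw [L4_0]
    exact le_trans (pplTM_four_le q) (ih q (by omega))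
  · obtain ⟨q, rfl⟩ : ∃ q, n = 4*q+1 := ⟨n/4, by omega⟩
    rw [L4_1]
    have := pplTM_succ_le (4*q)
    have h40 := le_trans (pplTM_four_le q) (ih q (by omega))
    omega
  · obtain ⟨q, rfl⟩ : ∃ q, n = 4*q+2 := ⟨n/4, by omega⟩
    rw [L4_2]
    -- route a: via 4q+1
    have ha1 : pplTM (4*q+1) ≤ L q + 1 := by
      have h1 := pplTM_succ_le (4*q)
      have h2 := le_trans (pplTM_four_le q) (ih q (by omega))
      omega
    have ha : pplTM (4*q+2) ≤ L q + 2 := by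
      have := pplTM_succ_le (4*q+1)
      rw [show 4*q+1+1 = 4*q+2 by ring] at this
      omega
    -- route b: via 4q+3 ≤ 4(q+1) + 1
    have hb4 : pplTM (4*(q+1)) ≤ L (q+1) := by
      exact le_trans (pplTM_four_le (q+1)) (ih (q+1) (by omega))
    have hb3 : pplTM (4*q+3) ≤ L (q+1) + 1 := by
      have := pplTM_le_succ (4*q+3)
      rw [show 4*q+3+1 = 4*(q+1) by ring] at this
      omega
    have hb : pplTM (4*q+2) ≤ L (q+1) + 2 := by
      have := pplTM_le_succ (4*q+2)
      rw [show 4*q+2+1 = 4*q+3 by ring] at this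
      omega
    omega
  · obtain ⟨q, rfl⟩ : ∃ q, n = 4*q+3 := ⟨n/4, by omega⟩
    rw [L4_3]
    have ha1 : pplTM (4*q+1) ≤ L q + 1 := by
      have h1 := pplTM_succ_le (4*q)
      have h2 := le_trans (pplTM_four_le q) (ih q (by omega))
      omega
    have ha : pplTM (4*q+3) ≤ L q + 2 := by
      have := pplTM_pair_le q
      omega
    have hb : pplTM (4*q+3) ≤ L (q+1) + 1 := by
      have h1 := pplTM_le_succ (4*q+3)
      rw [show 4*q+3+1 = 4*(q+1) by ring] at h1
      have h2 := le_trans (pplTM_four_le (q+1)) (ih (q+1) (by omega))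
      omega
    omega

/-! ### lower bound for pplTM -/

lemma pal_list_palF {b l : ℕ} {p : List ℕ}
    (hpe : p = (List.range' b l).map tm) (hpal : p.Palindrome) : PalF b l := by
  intro x y hx hy hs
  obtain ⟨i, rfl⟩ : ∃ i, x = b + i := ⟨x - b, by omega⟩
  obtain ⟨j, rfl⟩ : ∃ j, y = b + j := ⟨y - b, by omega⟩
  have hij : i + j + 1 = l := by omega
  have hlen : p.length = l := by rw [hpe]; simp
  have hi : i < p.length := by omega
  have hj : j < p.length := by omega
  have hget : ∀ k (hk : k < p.length), p[k]'hk = tm (b+k) := by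
    subst hpe; intro k hk; simp [List.getElem_map, List.getElem_range']
  have hrev : p.reverse = p := hpal.reverse_eq
  have e1 := List.getElem_of_eq hrev.symm hi
  rw [List.getElem_reverse] at e1
  have e2 := hget (p.length - 1 - i) (by omega)
  have e3 : b + (p.length - 1 - i) = b + j := by omega
  rw [e2, e3] at e1
  rw [← hget i hi, e1]

lemma lower_walk : ∀ (ps : List (List ℕ)) (b n : ℕ),
    (∀ p ∈ ps, p.Palindrome) →
    ps.flatten = (List.range' b n).map tm →
    ps.flatten.length = n →
    L (b + n) ≤ L b + ps.length := by
  intro ps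
  induction ps with
  | nil =>
    intro b n _ _ hlen
    simp only [List.flatten_nil, List.length_nil] at hlen
    subst hlen
    simp
  | cons p t ih =>
    intro b n hpal hflat hlen
    simp only [List.flatten_cons, List.length_append] at hflat hlen
    set lp := p.length with hlp
    set lr := t.flatten.length with hlr
    have hn : n = lp + lr := hlen.symm
    subst hn
    have hr : List.range' b (lp + lr) = List.range' b lp ++ List.range' (b + lp) lr := by
      have h : List.range' b lp 1 ++ List.range' (b + 1 * lp) lr 1 = List.range' b (lr + lp) 1 := by
        rw [Nat.add_comm lr lp]; exact List.range'_append
      simp only [one_mul] at h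
      rw [Nat.add_comm lp lr]
      exact h.symm
    rw [hr, List.map_append] at hflat
    have hple : p.length = (List.map tm (List.range' b lp)).length := by simp [hlp]
    obtain ⟨hp1, hp2⟩ := List.append_inj hflat hple
    have hmaster := master lp b (pal_list_palF hp1 (hpal p (by simp)))
    have hih := ih (b + lp) lr (fun q hq => hpal q (by simp [hq])) hp2 rfl
    calc L (b + (lp + lr)) = L ((b + lp) + lr) := by rw [Nat.add_assoc]
      _ ≤ L (b + lp) + t.length := hih
      _ ≤ (L b + 1) + t.length := by omega
      _ = L b + (p :: t).length := by simp; omega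

lemma L_le_pplTM (n : ℕ) : L n ≤ pplTM n := by
  obtain ⟨ps, hlen, hflat, hpal⟩ := exists_decomp ((List.range n).map tm)
  have h1 : ps.flatten = (List.range' 0 n).map tm := by
    rw [hflat, List.range_eq_range']
  have h2 : ps.flatten.length = n := by rw [hflat]; simp
  have := lower_walk ps 0 n (fun p hp => (hpal p hp).2) h1 h2
  rw [L0] at this
  simpa [hlen, pplTM] using this

lemma pplTM_eq_L (n : ℕ) : pplTM n = L n :=
  le_antisymm (pplTM_le_L n) (L_le_pplTM n)

/-! ### the sequence of shortest prefixes -/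

lemma L4 : L 4 = 1 := by rw [show (4:ℕ) = 4*1 by norm_num, L4_0, L1]
lemma L5 : L 5 = 2 := by rw [show (5:ℕ) = 4*1+1 by norm_num, L4_1, L1]
lemma L6 : L 6 = 3 := by rw [show (6:ℕ) = 4*1+2 by norm_num, L4_2, L1, L2]; omega

def Good (k s : ℕ) : Prop := L s = k ∧ ∀ n < s, L n < k

lemma sp_of_good {k s : ℕ} (h : Good k s) : spTM k = s := by
  have hset : {n | pplTM n = k} = {n | L n = k} := by
    ext n; simp [pplTM_eq_L]
  unfold spTM
  rw [hset]
  have hmem : s ∈ {n | L n = k} := h.1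
  have h1 : sInf {n | L n = k} ≤ s := Nat.sInf_le hmem
  rcases lt_or_eq_of_le h1 with hlt | he
  · exfalso
    have h2 := Nat.sInf_mem (⟨s, hmem⟩ : {n | L n = k}.Nonempty)
    simp only [Set.mem_setOf_eq] at h2
    have := h.2 _ hlt
    omega
  · exact he

lemma good_one : Good 1 1 := by
  refine ⟨L1, ?_⟩
  intro n hn
  interval_cases n
  · rw [L0]; omega

lemma good_two : Good 2 2 := by
  refine ⟨L2, ?_⟩
  intro n hn
  interval_cases n
  · rw [L0]; omega
  · rw [L1]; omega

lemma good_three : Good 3 6 := by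
  refine ⟨L6, ?_⟩
  intro n hn
  interval_cases n
  · rw [L0]; omega
  · rw [L1]; omega
  · rw [L2]; omega
  · rw [L3]; omega
  · rw [L4]; omega
  · rw [L5]; omega

lemma good_pos {k s : ℕ} (hk : 1 ≤ k) (h : Good k s) : 1 ≤ s := by
  rcases Nat.eq_zero_or_pos s with rfl | hs
  · exfalso; have := h.1; rw [L0] at this; omega
  · exact hs

lemma good_step {k s : ℕ} (hk : 1 ≤ k) (h : Good k s) : Good (k+3) (16*s-6) := by
  obtain ⟨hLs, hlt⟩ := h
  have hs1 : 1 ≤ s := good_pos hk ⟨hLs, hlt⟩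
  obtain ⟨t, rfl⟩ : ∃ t, s = t+1 := ⟨s-1, by omega⟩
  have hLt : L t + 1 = k := by
    have h1 : L t < k := hlt t (by omega)
    have h2 := L_succ_le t
    omega
  have step1 : ∀ m, m < 4*(t+1) → L m ≤ k+1 := by
    intro m hm
    rcases (by omega : m % 4 = 0 ∨ m % 4 = 1 ∨ m % 4 = 2 ∨ m % 4 = 3) with h | h | h | h
    · obtain ⟨q, rfl⟩ : ∃ q, m = 4*q := ⟨m/4, by omega⟩
      rw [L4_0]
      have := hlt q (by omega); omega
    · obtain ⟨q, rfl⟩ : ∃ q, m = 4*q+1 := ⟨m/4, by omega⟩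
      rw [L4_1]
      have := hlt q (by omega); omega
    · obtain ⟨q, rfl⟩ : ∃ q, m = 4*q+2 := ⟨m/4, by omega⟩
      rw [L4_2]
      have := hlt q (by omega); omega
    · obtain ⟨q, rfl⟩ : ∃ q, m = 4*q+3 := ⟨m/4, by omega⟩
      rw [L4_3]
      have hq1 : L (q+1) ≤ k := by
        rcases (by omega : q + 1 < t+1 ∨ q+1 = t+1) with hh | hh
        · have := hlt (q+1) hh; omega
        · rw [hh, hLs]
      omega
  have claim2 : ∀ q, q+2 < 4*(t+1) → min (L q) (L (q+1)) ≤ k := by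
    intro q hq
    rcases (by omega : q % 4 = 0 ∨ q % 4 = 1 ∨ q % 4 = 2 ∨ q % 4 = 3) with h | h | h | h
    · obtain ⟨u, rfl⟩ : ∃ u, q = 4*u := ⟨q/4, by omega⟩
      rw [L4_0]
      have := hlt u (by omega); omega
    · obtain ⟨u, rfl⟩ : ∃ u, q = 4*u+1 := ⟨q/4, by omega⟩
      rw [L4_1]
      have := hlt u (by omega); omega
    · obtain ⟨u, rfl⟩ : ∃ u, q = 4*u+2 := ⟨q/4, by omega⟩
      rw [show 4*u+2+1 = 4*u+3 by ring, L4_3]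
      have := hlt (u+1) (by omega); omega
    · obtain ⟨u, rfl⟩ : ∃ u, q = 4*u+3 := ⟨q/4, by omega⟩
      rw [L4_3]
      have := hlt (u+1) (by omega); omega
  have step2 : ∀ n, n < 16*(t+1)-6 → L n < k+3 := by
    intro n hn
    rcases (by omega : n % 4 = 0 ∨ n % 4 = 1 ∨ n % 4 = 2 ∨ n % 4 = 3) with h | h | h | h
    · obtain ⟨q, rfl⟩ : ∃ q, n = 4*q := ⟨n/4, by omega⟩
      rw [L4_0]
      have := step1 q (by omega); omega
    · obtain ⟨q, rfl⟩ : ∃ q, n = 4*q+1 := ⟨n/4, by omega⟩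
      rw [L4_1]
      have := step1 q (by omega); omega
    · obtain ⟨q, rfl⟩ : ∃ q, n = 4*q+2 := ⟨n/4, by omega⟩
      rw [L4_2]
      have := claim2 q (by omega); omega
    · obtain ⟨q, rfl⟩ : ∃ q, n = 4*q+3 := ⟨n/4, by omega⟩
      rw [L4_3]
      have := step1 (q+1) (by omega); omega
  have hval : L (16*(t+1)-6) = k+3 := by
    rw [show 16*(t+1)-6 = 4*(4*t+2)+2 from by omega, L4_2, L4_2,
      show 4*t+2+1 = 4*t+3 by ring, L4_3, hLs]
    omega
  exact ⟨hval, step2⟩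

lemma exists_good : ∀ k, 1 ≤ k → ∃ s, Good k s := by
  intro k
  induction k using Nat.strong_induction_on with
  | _ k ih =>
  intro hk
  rcases (by omega : k = 1 ∨ k = 2 ∨ k = 3 ∨ 4 ≤ k) with rfl | rfl | rfl | h4
  · exact ⟨1, good_one⟩
  · exact ⟨2, good_two⟩
  · exact ⟨6, good_three⟩
  · obtain ⟨j, rfl⟩ : ∃ j, k = j + 3 := ⟨k-3, by omega⟩
    obtain ⟨s, hs⟩ := ih j (by omega) (by omega)
    exact ⟨16*s-6, good_step (by omega) hs⟩

/-- For every `k ≥ 1` some prefix of the Thue–Morse word has palindromic length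
`k` (so `SP_t(k)` is well defined); moreover `SP_t(1) = 1`, `SP_t(2) = 2`,
`SP_t(3) = 6`, and `SP_t(k+3) = 16·SP_t(k) − 6` for all `k ≥ 1`. -/
theorem spTM_recurrence :
    (∀ k, 1 ≤ k → ∃ n, pplTM n = k) ∧
    spTM 1 = 1 ∧ spTM 2 = 2 ∧ spTM 3 = 6 ∧
    ∀ k, 1 ≤ k → spTM (k + 3) + 6 = 16 * spTM k := by
  refine ⟨?_, ?_, ?_, ?_, ?_⟩
  · intro k hk
    obtain ⟨s, hs⟩ := exists_good k hk
    exact ⟨s, by rw [pplTM_eq_L]; exact hs.1⟩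
  · exact sp_of_good good_one
  · exact sp_of_good good_two
  · exact sp_of_good good_three
  · intro k hk
    obtain ⟨s, hs⟩ := exists_good k hk
    have hstep := good_step hk hs
    have hs1 : 1 ≤ s := good_pos hk hs
    rw [sp_of_good hs, sp_of_good hstep]
    omega
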